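/- For every δ ∈ (0,1) and every nonempty A ⊆ {0,1}^n, there exists a Santha-Vazirani distribution μ with bias δ on {0,1}^n such that μ(A) ≥ ((1+δ)/2)^{n − log₂|A|}. -/

import Mathlib

open Finset

/-- `μ` is a probability distribution on the finite type `A`. -/
def IsDist {A : Type*} [Fintype A] (μ : A → ℝ) : Prop :=
  (∀ a, 0 ≤ μ a) ∧ ∑ a, μ a = 1

open Classical in
/-- Probability of an event under a distribution on a finite type. -/
noncomputable def Pr {A : Type*} [Fintype A] (μ : A → ℝ) (p : A → Prop) : ℝ :=
  ∑ a, if p a then μ a else 0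

/-- `μ` is a Santha-Vazirani distribution with bias `δ`: for every bit `i` and every
prefix `z` of positive probability, `P[Xᵢ = 1 | prefix] ∈ [(1−δ)/2, (1+δ)/2]`. -/
def IsSV {n : ℕ} (δ : ℝ) (μ : (Fin n → Bool) → ℝ) : Prop :=
  ∀ (i : Fin n) (z : Fin n → Bool),
    0 < Pr μ (fun x => ∀ j, j < i → x j = z j) →
      (1 - δ) / 2 * Pr μ (fun x => ∀ j, j < i → x j = z j)
          ≤ Pr μ (fun x => x i = true ∧ ∀ j, j < i → x j = z j) ∧
        Pr μ (fun x => x i = true ∧ ∀ j, j < i → x j = z j)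
          ≤ (1 + δ) / 2 * Pr μ (fun x => ∀ j, j < i → x j = z j)


/-! ### Auxiliary constructions -/

section SVaux

lemma SV_concave_step {α a b : ℝ} (hα0 : 0 ≤ α) (hα1 : α ≤ 1) (hb : 0 < b) (hab : b ≤ a) :
    (a + b) ^ α + b ^ α ≤ a ^ α + (2 * b) ^ α := by
  have ha : 0 < a := hb.trans_le hab
  have hf := Real.concaveOn_rpow hα0 hα1
  set l : ℝ := b / a with hl
  have hl0 : 0 ≤ l := by positivity
  have hl1 : l ≤ 1 := by rw [hl, div_le_one ha]; exact hab
  have h1 := hf.2 (Set.mem_Ici.2 (by positivity : (0:ℝ) ≤ a + b)) (Set.mem_Ici.2 hb.le)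
    hl0 (show (0:ℝ) ≤ 1 - l by linarith) (show l + (1 - l) = 1 by ring)
  have h2 := hf.2 (Set.mem_Ici.2 (by positivity : (0:ℝ) ≤ a + b)) (Set.mem_Ici.2 hb.le)
    (show (0:ℝ) ≤ 1 - l by linarith) hl0 (show (1 - l) + l = 1 by ring)
  simp only [smul_eq_mul] at h1 h2
  have e1 : l * (a + b) + (1 - l) * b = 2 * b := by field_simp [hl]; rw [hl]; linear_combination (div_mul_cancel₀ b ha.ne')
  have e2 : (1 - l) * (a + b) + l * b = a := by field_simp [hl]; rw [hl]; linear_combination (-1 : ℝ) * (div_mul_cancel₀ b ha.ne')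
  rw [e1] at h1
  rw [e2] at h2
  nlinarith [h1, h2]

lemma SV_rpow_logb_comm {q k : ℝ} (hq : 0 < q) (hk : 0 < k) :
    q ^ (-(Real.logb 2 k)) = k ^ (-(Real.logb 2 q)) := by
  rw [Real.rpow_def_of_pos hq, Real.rpow_def_of_pos hk, Real.logb, Real.logb]
  ring_nf

lemma SV_combine_core {q : ℝ} (hq : 1/2 < q) (hq1 : q < 1) {a b : ℝ} (hb : 0 < b) (hab : b ≤ a) :
    q * (a + b) ^ (-(Real.logb 2 q))
      ≤ q * a ^ (-(Real.logb 2 q)) + (1 - q) * b ^ (-(Real.logb 2 q)) := by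
  have hq0 : (0:ℝ) < q := by linarith
  set α : ℝ := -(Real.logb 2 q) with hα
  have hα0 : 0 ≤ α := by
    have : Real.logb 2 q < 0 := Real.logb_neg one_lt_two hq0 hq1
    linarith
  have hα1 : α ≤ 1 := by
    have h2 : Real.logb 2 (1/2 : ℝ) < Real.logb 2 q :=
      Real.logb_lt_logb one_lt_two (by norm_num) hq
    have h3 : Real.logb 2 (1/2 : ℝ) = -1 := by
      rw [one_div, Real.logb_inv, Real.logb_self_eq_one] <;> norm_num
    rw [h3] at h2; rw [hα]; linarith
  have h2α : (2:ℝ) ^ α = q⁻¹ := by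
    rw [hα, Real.rpow_neg (by norm_num), Real.rpow_logb (by norm_num) (by norm_num) hq0]
  have key := SV_concave_step hα0 hα1 hb hab
  have h2b : (2 * b) ^ α = q⁻¹ * b ^ α := by
    rw [Real.mul_rpow (by norm_num) hb.le, h2α]
  rw [h2b] at key
  have h3 : q * ((a+b)^α + b^α) ≤ q * (a^α + q⁻¹ * b^α) :=
    mul_le_mul_of_nonneg_left key hq0.le
  have hx : q * (a^α + q⁻¹ * b^α) = q * a^α + b^α := by
    rw [mul_add, ← mul_assoc, mul_inv_cancel₀ hq0.ne', one_mul]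
  rw [hx, mul_add] at h3
  linarith

lemma SV_rpow_sub_logb {q : ℝ} (hq0 : 0 < q) (m : ℝ) {k : ℝ} (hk : 0 < k) :
    q ^ (m - Real.logb 2 k) = q ^ m * k ^ (-(Real.logb 2 q)) := by
  rw [sub_eq_add_neg, Real.rpow_add hq0, SV_rpow_logb_comm hq0 hk]

/-- one side of a set of (n+1)-bit strings, by first bit. -/
def SVside {n : ℕ} (A : Finset (Fin (n+1) → Bool)) (b : Bool) : Finset (Fin n → Bool) :=
  univ.filter (fun y => Fin.cons b y ∈ A)

def SVbig {n : ℕ} (A : Finset (Fin (n+1) → Bool)) : Bool :=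
  decide ((SVside A false).card ≤ (SVside A true).card)

def SVrec {n : ℕ} (A : Finset (Fin (n+1) → Bool)) (b : Bool) : Finset (Fin n → Bool) :=
  if (SVside A b).Nonempty then SVside A b else univ

noncomputable def svμ (q : ℝ) : (n : ℕ) → Finset (Fin n → Bool) → (Fin n → Bool) → ℝ
  | 0, _ => fun _ => 1
  | n+1, A => fun x =>
      (if x 0 = SVbig A then q else 1 - q) * svμ q n (SVrec A (x 0)) (Fin.tail x)

lemma svμ_succ {q : ℝ} {n : ℕ} (A : Finset (Fin (n+1) → Bool)) (x : Fin (n+1) → Bool) :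
    svμ q (n+1) A x
      = (if x 0 = SVbig A then q else 1 - q) * svμ q n (SVrec A (x 0)) (Fin.tail x) := rfl

lemma SV_sum_cons_split {n : ℕ} (f : (Fin (n+1) → Bool) → ℝ) :
    ∑ x, f x = (∑ y : Fin n → Bool, f (Fin.cons true y)) +
               (∑ y : Fin n → Bool, f (Fin.cons false y)) := by
  rw [← Fintype.sum_equiv (Fin.consEquiv fun _ => Bool)
      (fun p => f (Fin.cons p.1 p.2)) f (fun p => rfl),
    Fintype.sum_prod_type, Fintype.sum_bool]

lemma svμ_pos {q : ℝ} (hq0 : 0 < q) (hq1 : q < 1) :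
    ∀ (n : ℕ) (A : Finset (Fin n → Bool)) (x : Fin n → Bool), 0 < svμ q n A x := by
  intro n
  induction n with
  | zero => intro A x; simp [svμ]
  | succ n ih =>
    intro A x
    rw [svμ_succ]
    have := ih (SVrec A (x 0)) (Fin.tail x)
    split <;> nlinarith

lemma svμ_sum {q : ℝ} : ∀ (n : ℕ) (A : Finset (Fin n → Bool)), ∑ x, svμ q n A x = 1 := by
  intro n
  induction n with
  | zero => intro A; simp [svμ]
  | succ n ih =>
    intro A
    rw [SV_sum_cons_split (svμ q (n+1) A)]
    simp only [svμ_succ, Fin.cons_zero, Fin.tail_cons]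
    rw [← Finset.mul_sum, ← Finset.mul_sum, ih, ih]
    cases h : SVbig A <;> simp [h]

lemma SV_Pr_congr {m : Type*} [Fintype m] (μ : m → ℝ) {p r : m → Prop}
    (h : ∀ x, p x ↔ r x) : Pr μ p = Pr μ r := by
  classical
  unfold Pr
  exact Finset.sum_congr rfl fun x _ => by simp [h x]

lemma SV_Pr_true {m : Type*} [Fintype m] (μ : m → ℝ) {p : m → Prop}
    (h : ∀ x, p x) : Pr μ p = ∑ x, μ x := by
  classical
  unfold Pr
  exact Finset.sum_congr rfl fun x _ => by simp [h x]

lemma SV_Pr_cons {q : ℝ} {n : ℕ} (A : Finset (Fin (n+1) → Bool)) (c : Bool)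
    (p : (Fin n → Bool) → Prop) :
    Pr (svμ q (n+1) A) (fun x => x 0 = c ∧ p (Fin.tail x))
      = (if c = SVbig A then q else 1 - q) * Pr (svμ q n (SVrec A c)) p := by
  classical
  unfold Pr
  rw [SV_sum_cons_split]
  simp only [svμ_succ, Fin.cons_zero, Fin.tail_cons]
  cases c <;>
    simp [Finset.mul_sum, mul_ite, mul_zero]

lemma SV_sum_A_split {n : ℕ} (A : Finset (Fin (n+1) → Bool)) (f : (Fin (n+1) → Bool) → ℝ) :
    ∑ x ∈ A, f x = (∑ y ∈ SVside A true, f (Fin.cons true y)) +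
                   (∑ y ∈ SVside A false, f (Fin.cons false y)) := by
  classical
  have h0 : ∑ x ∈ A, f x = ∑ x, if x ∈ A then f x else 0 := by
    rw [Finset.sum_ite_mem, Finset.univ_inter]
  rw [h0, SV_sum_cons_split (fun x => if x ∈ A then f x else 0), SVside, SVside,
    Finset.sum_filter, Finset.sum_filter]

lemma SV_card_split {n : ℕ} (A : Finset (Fin (n+1) → Bool)) :
    A.card = (SVside A true).card + (SVside A false).card := by
  have := SV_sum_A_split A (fun _ => (1:ℝ))
  simp only [Finset.sum_const, nsmul_eq_mul, mul_one] at this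
  exact_mod_cast this

end SVaux

section SVmain

lemma svμ_isSV {δ q : ℝ} (hδ0 : 0 < δ) (hδ1 : δ < 1) (hq : q = (1+δ)/2) :
    ∀ (n : ℕ) (A : Finset (Fin n → Bool)) (i : Fin n) (z : Fin n → Bool),
      (1 - δ) / 2 * Pr (svμ q n A) (fun x => ∀ j, j < i → x j = z j)
          ≤ Pr (svμ q n A) (fun x => x i = true ∧ ∀ j, j < i → x j = z j) ∧
      Pr (svμ q n A) (fun x => x i = true ∧ ∀ j, j < i → x j = z j)
          ≤ (1 + δ) / 2 * Pr (svμ q n A) (fun x => ∀ j, j < i → x j = z j) := by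
  intro n
  induction n with
  | zero => intro A i; exact i.elim0
  | succ n ih =>
    intro A i z
    induction i using Fin.cases with
    | zero =>
      have hpre : Pr (svμ q (n+1) A) (fun x => ∀ j, j < (0:Fin (n+1)) → x j = z j) = 1 := by
        rw [SV_Pr_true _ (fun x j hj => absurd hj (Fin.not_lt_zero j))]
        exact svμ_sum (n+1) A
      have e : ∀ x : Fin (n+1) → Bool,
          (x 0 = true ∧ ∀ j, j < (0:Fin (n+1)) → x j = z j) ↔
          (x 0 = true ∧ (fun _ : Fin n → Bool => True) (Fin.tail x)) := by
        intro x
        constructor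
        · rintro ⟨h, _⟩; exact ⟨h, trivial⟩
        · rintro ⟨h, _⟩; exact ⟨h, fun j hj => absurd hj (Fin.not_lt_zero j)⟩
      have hev : Pr (svμ q (n+1) A) (fun x => x 0 = true ∧ ∀ j, j < (0:Fin (n+1)) → x j = z j)
          = (if true = SVbig A then q else 1 - q) := by
        rw [SV_Pr_congr _ e, SV_Pr_cons A true (fun _ => True),
          SV_Pr_true _ (fun _ => trivial), svμ_sum, mul_one]
      rw [hpre, hev, mul_one, mul_one]
      constructor <;> split <;> (rw [hq]) <;> linarith
    | succ i' =>
      have hpre : ∀ x : Fin (n+1) → Bool,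
          (∀ j, j < Fin.succ i' → x j = z j) ↔
          (x 0 = z 0 ∧ (fun y : Fin n → Bool =>
            ∀ j, j < i' → y j = Fin.tail z j) (Fin.tail x)) := by
        intro x
        constructor
        · intro h
          exact ⟨h 0 (Fin.succ_pos i'), fun j hj => h j.succ (Fin.succ_lt_succ_iff.mpr hj)⟩
        · rintro ⟨h0, h⟩ j hj
          induction j using Fin.cases with
          | zero => exact h0
          | succ k => exact h k (Fin.succ_lt_succ_iff.mp hj)
      have hev : ∀ x : Fin (n+1) → Bool,
          (x (Fin.succ i') = true ∧ ∀ j, j < Fin.succ i' → x j = z j) ↔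
          (x 0 = z 0 ∧ (fun y : Fin n → Bool =>
            y i' = true ∧ ∀ j, j < i' → y j = Fin.tail z j) (Fin.tail x)) := by
        intro x
        have h1 := hpre x
        simp only [Fin.tail] at *
        tauto
      have e1 : Pr (svμ q (n+1) A) (fun x => ∀ j, j < Fin.succ i' → x j = z j)
          = (if z 0 = SVbig A then q else 1 - q) *
            Pr (svμ q n (SVrec A (z 0))) (fun y => ∀ j, j < i' → y j = Fin.tail z j) :=
        (SV_Pr_congr _ hpre).trans
          (SV_Pr_cons A (z 0) (fun y => ∀ j, j < i' → y j = Fin.tail z j))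
      have e2 : Pr (svμ q (n+1) A) (fun x => x (Fin.succ i') = true ∧ ∀ j, j < Fin.succ i' → x j = z j)
          = (if z 0 = SVbig A then q else 1 - q) *
            Pr (svμ q n (SVrec A (z 0))) (fun y => y i' = true ∧ ∀ j, j < i' → y j = Fin.tail z j) :=
        (SV_Pr_congr _ hev).trans
          (SV_Pr_cons A (z 0) (fun y => y i' = true ∧ ∀ j, j < i' → y j = Fin.tail z j))
      rw [e1, e2]
      have hw : 0 ≤ (if z 0 = SVbig A then q else 1 - q) := by
        split <;> (rw [hq]) <;> linarith
      have hih := ih (SVrec A (z 0)) i' (Fin.tail z)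
      constructor
      · rw [mul_left_comm]
        exact mul_le_mul_of_nonneg_left hih.1 hw
      · rw [mul_left_comm]
        exact mul_le_mul_of_nonneg_left hih.2 hw

lemma SV_combine_main {q : ℝ} (hq : 1/2 < q) (hq1 : q < 1) (n : ℕ) {a b : ℕ}
    (hab : b ≤ a) (ha : 0 < a) {Sa Sb : ℝ} (hSb0 : 0 ≤ Sb)
    (hSa : q ^ ((n : ℝ) - Real.logb 2 (a:ℝ)) ≤ Sa)
    (hSb : b = 0 ∨ (0 < b ∧ q ^ ((n : ℝ) - Real.logb 2 (b:ℝ)) ≤ Sb)) :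
    q ^ ((((n+1) : ℕ) : ℝ) - Real.logb 2 ((a : ℝ) + (b:ℝ))) ≤ q * Sa + (1 - q) * Sb := by
  have hq0 : (0:ℝ) < q := by linarith
  have ha' : (0:ℝ) < a := by exact_mod_cast ha
  have hcast : (((n+1) : ℕ) : ℝ) = (n:ℝ) + 1 := by push_cast; ring
  rw [hcast]
  rcases hSb with hb0 | ⟨hb, hSb⟩
  · subst hb0
    simp only [Nat.cast_zero, add_zero]
    have he : (n:ℝ) + 1 - Real.logb 2 (a:ℝ) = ((n:ℝ) - Real.logb 2 (a:ℝ)) + 1 := by ring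
    rw [he, Real.rpow_add_one hq0.ne']
    have h1 : q * q ^ ((n:ℝ) - Real.logb 2 (a:ℝ)) ≤ q * Sa :=
      mul_le_mul_of_nonneg_left hSa hq0.le
    nlinarith
  · have hb' : (0:ℝ) < b := by exact_mod_cast hb
    have hab' : (b:ℝ) ≤ (a:ℝ) := by exact_mod_cast hab
    have he : (n:ℝ) + 1 - Real.logb 2 ((a:ℝ)+(b:ℝ)) = ((n:ℝ) - Real.logb 2 ((a:ℝ)+(b:ℝ))) + 1 := by
      ring
    rw [he, Real.rpow_add_one hq0.ne',
      SV_rpow_sub_logb hq0 _ (by linarith : (0:ℝ) < (a:ℝ)+(b:ℝ))]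
    rw [SV_rpow_sub_logb hq0 _ ha'] at hSa
    rw [SV_rpow_sub_logb hq0 _ hb'] at hSb
    have hcore := SV_combine_core hq hq1 hb' hab'
    have hqn : (0:ℝ) < q ^ ((n:ℝ)) := Real.rpow_pos_of_pos hq0 _
    have h1 := mul_le_mul_of_nonneg_left hcore hqn.le
    have h2 := mul_le_mul_of_nonneg_left hSa hq0.le
    have h3 := mul_le_mul_of_nonneg_left hSb (by linarith : (0:ℝ) ≤ 1 - q)
    nlinarith [h1, h2, h3]

lemma svμ_bound {q : ℝ} (hq : 1/2 < q) (hq1 : q < 1) :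
    ∀ (n : ℕ) (A : Finset (Fin n → Bool)), A.Nonempty →
      q ^ ((n : ℝ) - Real.logb 2 (A.card : ℝ)) ≤ ∑ x ∈ A, svμ q n A x := by
  have hq0 : (0:ℝ) < q := by linarith
  intro n
  induction n with
  | zero =>
    intro A hA
    have h1 : A.card = 1 := le_antisymm (by simpa using Finset.card_le_univ A) hA.card_pos
    have h2 : ∑ x ∈ A, svμ q 0 A x = 1 := by
      simp [svμ, h1]
    rw [h2, h1]
    simp
  | succ n ih =>
    intro A hA
    rw [SV_sum_A_split A (svμ q (n+1) A)]
    simp only [svμ_succ, Fin.cons_zero, Fin.tail_cons]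
    rw [← Finset.mul_sum, ← Finset.mul_sum]
    have hcard : A.card = (SVside A true).card + (SVside A false).card := SV_card_split A
    have hcpos : 0 < A.card := hA.card_pos
    have hS1 : (0:ℝ) ≤ ∑ y ∈ SVside A true, svμ q n (SVrec A true) y :=
      Finset.sum_nonneg fun y _ => (svμ_pos hq0 hq1 n _ y).le
    have hS0 : (0:ℝ) ≤ ∑ y ∈ SVside A false, svμ q n (SVrec A false) y :=
      Finset.sum_nonneg fun y _ => (svμ_pos hq0 hq1 n _ y).le
    have hrec : ∀ b : Bool, 0 < (SVside A b).card →
        q ^ ((n : ℝ) - Real.logb 2 ((SVside A b).card : ℝ))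
          ≤ ∑ y ∈ SVside A b, svμ q n (SVrec A b) y := by
      intro b hb
      have hne : (SVside A b).Nonempty := Finset.card_pos.mp hb
      rw [SVrec, if_pos hne]
      exact ih (SVside A b) hne
    cases hbs : SVbig A
    · -- bigSide = false : side false is strictly bigger
      have hlt : ¬((SVside A false).card ≤ (SVside A true).card) := by
        have := hbs
        unfold SVbig at this
        simpa using this
      have hle : (SVside A true).card ≤ (SVside A false).card := le_of_not_ge hlt
      have hc0 : 0 < (SVside A false).card := by omega
      simp only [hbs]
      have hmain := SV_combine_main hq hq1 n hle hc0 hS1 (hrec false hc0) ?_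
      · have hAc : ((A.card : ℕ) : ℝ) = ((SVside A false).card : ℝ) + ((SVside A true).card : ℝ) := by
          rw [hcard]; push_cast; ring
        rw [hAc]
        simpa [mul_comm, add_comm] using hmain
      · by_cases h0 : (SVside A true).card = 0
        · exact Or.inl h0
        · exact Or.inr ⟨Nat.pos_of_ne_zero h0, hrec true (Nat.pos_of_ne_zero h0)⟩
    · -- bigSide = true
      have hle : (SVside A false).card ≤ (SVside A true).card := by
        have := hbs
        unfold SVbig at this
        simpa using this
      have hc1 : 0 < (SVside A true).card := by omega
      simp only [hbs]
      have hmain := SV_combine_main hq hq1 n hle hc1 hS0 (hrec true hc1) ?_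
      · have hAc : ((A.card : ℕ) : ℝ) = ((SVside A true).card : ℝ) + ((SVside A false).card : ℝ) := by
          rw [hcard]; push_cast; ring
        rw [hAc]
        simpa using hmain
      · by_cases h0 : (SVside A false).card = 0
        · exact Or.inl h0
        · exact Or.inr ⟨Nat.pos_of_ne_zero h0, hrec false (Nat.pos_of_ne_zero h0)⟩

end SVmain

/-- For every `δ ∈ (0,1)` and nonempty `A ⊆ {0,1}^n`, some SV distribution with bias `δ`
gives `A` probability at least `((1+δ)/2)^(n − log₂|A|)`. -/
theorem sv_hits_set {n : ℕ} (δ : ℝ) (hδ0 : 0 < δ) (hδ1 : δ < 1)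
    (A : Finset (Fin n → Bool)) (hA : A.Nonempty) :
    ∃ μ : (Fin n → Bool) → ℝ, IsDist μ ∧ IsSV δ μ ∧
      ((1 + δ) / 2) ^ ((n : ℝ) - Real.logb 2 (A.card)) ≤ ∑ x ∈ A, μ x := by
  set q : ℝ := (1+δ)/2 with hqdef
  have hq : 1/2 < q := by rw [hqdef]; linarith
  have hq1 : q < 1 := by rw [hqdef]; linarith
  refine ⟨svμ q n A, ⟨fun x => (svμ_pos (by linarith) hq1 n A x).le, svμ_sum n A⟩, ?_, ?_⟩
  · intro i z _
    exact svμ_isSV hδ0 hδ1 hqdef n A i z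
  · exact svμ_bound hq hq1 n A hA
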